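/- For μ ∈ [0, ∞) with m = ⌊e^μ⌋, the value p = (m + √(e^{-μ}·m·(1 + m − e^μ)))/(m(1+m)) lies in (0, 1] and satisfies m·p² + (1 − m·p)² = e^{-μ}, with ⌊1/p⌋ = m; i.e., it inverts the order-2 Rényi entropy of w(p). -/

import Mathlib

theorem stmt_12 (μ : ℝ) (hμ0 : 0 ≤ μ) (m : ℕ) (hm : m = ⌊Real.exp μ⌋₊ ) (p : ℝ)
    (hp : p = ((m : ℝ) + Real.sqrt (Real.exp (-μ) * (m : ℝ) * (1 + (m : ℝ) - Real.exp μ)))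
        / ((m : ℝ) * (1 + (m : ℝ)))) :
    p ∈ Set.Ioc (0 : ℝ) 1 ∧
    (m : ℝ) * p ^ 2 + (1 - (m : ℝ) * p) ^ 2 = Real.exp (-μ) ∧
    ⌊1 / p⌋₊ = m := by
  have hE1 : 1 ≤ Real.exp μ := Real.one_le_exp hμ0
  have hEpos : 0 < Real.exp μ := Real.exp_pos μ
  have hm1 : 1 ≤ m := by
    subst hm
    exact Nat.le_floor (by simpa using hE1)
  have hmE : (m : ℝ) ≤ Real.exp μ := by
    subst hm; exact Nat.floor_le hEpos.le
  have hEm : Real.exp μ < (m : ℝ) + 1 := by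
    subst hm; exact Nat.lt_floor_add_one _
  have hM : (1 : ℝ) ≤ (m : ℝ) := by exact_mod_cast hm1
  have hMpos : (0 : ℝ) < (m : ℝ) := by linarith
  have hinner : 0 < Real.exp (-μ) * (m : ℝ) * (1 + (m : ℝ) - Real.exp μ) := by
    have := Real.exp_pos (-μ)
    have : 0 < 1 + (m : ℝ) - Real.exp μ := by linarith
    positivity
  set s := Real.sqrt (Real.exp (-μ) * (m : ℝ) * (1 + (m : ℝ) - Real.exp μ)) with hs
  have hs0 : 0 < s := Real.sqrt_pos.mpr hinner
  have hssq : s ^ 2 = Real.exp (-μ) * (m : ℝ) * (1 + (m : ℝ) - Real.exp μ) :=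
    Real.sq_sqrt hinner.le
  have hexp : Real.exp (-μ) * Real.exp μ = 1 := by
    rw [← Real.exp_add]; simp
  have hexpneg : 0 < Real.exp (-μ) := Real.exp_pos _
  have hexple : Real.exp (-μ) ≤ 1 := by
    nlinarith
  have hs1 : s ≤ 1 := by
    rw [hs]
    apply Real.sqrt_le_one.mpr
    have h1 : 1 + (m : ℝ) - Real.exp μ ≤ 1 := by linarith
    have h2 : Real.exp (-μ) * (m : ℝ) ≤ 1 := by nlinarith
    nlinarith
  have hD : (0 : ℝ) < (m : ℝ) * (1 + (m : ℝ)) := by nlinarith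
  have hp0 : 0 < p := by
    rw [hp]; positivity
  have hp1 : p ≤ 1 / (m : ℝ) := by
    rw [hp, div_le_div_iff₀ hD hMpos]
    nlinarith
  have hp1' : p ≤ 1 := le_trans hp1 (by rw [div_le_one hMpos]; exact hM)
  have hp2 : 1 / ((m : ℝ) + 1) < p := by
    rw [hp, div_lt_div_iff₀ (by linarith) hD]
    nlinarith
  refine ⟨⟨hp0, hp1'⟩, ?_, ?_⟩
  · rw [hp]
    field_simp
    linear_combination ((m:ℝ)*(1+(m:ℝ)) + (1 - (m:ℝ)^2)) * hssq - ((m:ℝ)*(m:ℝ)*(1+(m:ℝ)) + ((m:ℝ) - (m:ℝ)^3)) * hexp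
  · rw [Nat.floor_eq_iff (by positivity)]
    constructor
    · rw [le_div_iff₀ hp0]
      calc (m : ℝ) * p ≤ (m : ℝ) * (1 / (m : ℝ)) := by
            exact mul_le_mul_of_nonneg_left hp1 hMpos.le
        _ = 1 := by field_simp
    · rw [div_lt_iff₀ hp0]
      have h := (div_lt_iff₀ (by linarith : (0:ℝ) < (m:ℝ)+1)).mp hp2
      nlinarith
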